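/- Consider the two-point boundary value problem ẋ(t) = A(t)x(t) + B(t)u⁻(t) − B(t)B(t)ᵀλ(t), x(t₀) = x₀, x(t_f) = x_f, and λ̇(t) = −x(t) + x⁻(t) − A(t)ᵀλ(t), with continuous matrix functions A, B and fixed x⁻ ∈ L², u⁻ ∈ L². If (x, λ) solves this TPBVP, then the pair (y, v) with y = x and v(t) = u⁻(t) − B(t)ᵀλ(t) satisfies the variational inequality characterizing the projection of (x⁻, u⁻) onto the affine set A = {(x,u) : ẋ = A(t)x + B(t)u, x(t₀)=x₀, x(t_f)=x_f}; namely, for every (ỹ, ṽ) ∈ A, ⟨(ỹ,ṽ) − (y,v), (x⁻,u⁻) − (y,v)⟩_{L²×L²} ≤ 0. -/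

import Mathlib

open MeasureTheory

lemma dot_swap {p q : ℕ} (M : Matrix (Fin p) (Fin q) ℝ) (a : Fin q → ℝ) (b : Fin p → ℝ) :
    ∑ i, M.mulVec a i * b i = ∑ j, a j * M.transpose.mulVec b j := by
  simp only [Matrix.mulVec, dotProduct, Matrix.transpose_apply,
    Finset.sum_mul, Finset.mul_sum]
  rw [Finset.sum_comm]
  congr 1; ext j; congr 1; ext i; ring

lemma key {n m : ℕ} (A : Matrix (Fin n) (Fin n) ℝ) (B : Matrix (Fin n) (Fin m) ℝ)
    (y x l w : Fin n → ℝ) (v u : Fin m → ℝ) :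
    ∑ i, (((A.mulVec y i + B.mulVec v i) -
        (A.mulVec x i + B.mulVec u i - (B * B.transpose).mulVec l i)) * l i +
      (y i - x i) * (-(x i) + w i - A.transpose.mulVec l i))
    = (∑ i, (y i - x i) * (w i - x i)) +
      ∑ j, (v j - (u j - B.transpose.mulVec l j)) *
        (u j - (u j - B.transpose.mulVec l j)) := by
  have h1 := dot_swap A y l
  have h2 := dot_swap A x l
  have h3 := dot_swap B v l
  have h4 := dot_swap B u l
  have h5 : ∑ i, (B * B.transpose).mulVec l i * l i
      = ∑ j, B.transpose.mulVec l j * B.transpose.mulVec l j := by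
    have := dot_swap B (B.transpose.mulVec l) l
    rw [Matrix.mulVec_mulVec] at this
    simpa using this
  simp only [sub_sub_cancel, neg_sub, sub_mul, add_mul, mul_sub, mul_add, mul_neg, neg_mul,
    Finset.sum_add_distrib, Finset.sum_sub_distrib] at *
  linarith


/-- if `(x, λ)` solves the two-point boundary value problem
`ẋ = A x + B u⁻ − B Bᵀ λ`, `x(t₀) = x₀`, `x(t_f) = x_f`,
`λ̇ = −x + x⁻ − Aᵀ λ`, then `(y, v) = (x, u⁻ − Bᵀλ)` satisfies the
variational inequality characterizing the projection of `(x⁻, u⁻)` onto the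
affine set defined by the controlled ODE with those boundary conditions. -/
theorem stmt_12 (n m : ℕ) (t0 tf : ℝ) (hts : t0 ≤ tf)
    (A : ℝ → Matrix (Fin n) (Fin n) ℝ) (B : ℝ → Matrix (Fin n) (Fin m) ℝ)
    (hA : Continuous A) (hB : Continuous B)
    (x0 xf : Fin n → ℝ)
    (xm : ℝ → Fin n → ℝ) (um : ℝ → Fin m → ℝ)
    (hxm : Continuous xm) (hum : Continuous um)
    (x lam : ℝ → Fin n → ℝ) (hxc : Continuous x) (hlamc : Continuous lam)
    (hx : ∀ t ∈ Set.Icc t0 tf, ∀ i, HasDerivAt (fun s => x s i)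
      ((A t).mulVec (x t) i + (B t).mulVec (um t) i
        - ((B t) * (B t).transpose).mulVec (lam t) i) t)
    (hlam : ∀ t ∈ Set.Icc t0 tf, ∀ i, HasDerivAt (fun s => lam s i)
      (-(x t i) + xm t i - (A t).transpose.mulVec (lam t) i) t)
    (hx0 : x t0 = x0) (hxf : x tf = xf) :
    ∀ (ytil : ℝ → Fin n → ℝ) (vtil : ℝ → Fin m → ℝ),
      Continuous ytil → Continuous vtil →
      (∀ t ∈ Set.Icc t0 tf, ∀ i, HasDerivAt (fun s => ytil s i)
        ((A t).mulVec (ytil t) i + (B t).mulVec (vtil t) i) t) →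
      ytil t0 = x0 → ytil tf = xf →
      (∫ t in Set.Icc t0 tf,
          ((∑ i, (ytil t i - x t i) * (xm t i - x t i)) +
            ∑ j, (vtil t j - (um t j - (B t).transpose.mulVec (lam t) j)) *
              (um t j - (um t j - (B t).transpose.mulVec (lam t) j)))) ≤ 0 := by
  intro ytil vtil hyc hvc hy hy0 hyf
  set F : ℝ → ℝ := fun t =>
      ((∑ i, (ytil t i - x t i) * (xm t i - x t i)) +
        ∑ j, (vtil t j - (um t j - (B t).transpose.mulVec (lam t) j)) *
          (um t j - (um t j - (B t).transpose.mulVec (lam t) j))) with hF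
  have hFc : Continuous F := by
    rw [hF]
    simp only [Matrix.mulVec, dotProduct, Matrix.transpose_apply]
    fun_prop
  have hderiv : ∀ t ∈ Set.uIcc t0 tf,
      HasDerivAt (fun s => ∑ i, (ytil s i - x s i) * lam s i) (F t) t := by
    intro t ht
    rw [Set.uIcc_of_le hts] at ht
    have hsum : HasDerivAt (fun s => ∑ i, (ytil s i - x s i) * lam s i)
        (∑ i, ((((A t).mulVec (ytil t) i + (B t).mulVec (vtil t) i) -
            ((A t).mulVec (x t) i + (B t).mulVec (um t) i
              - ((B t) * (B t).transpose).mulVec (lam t) i)) * lam t i +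
          (ytil t i - x t i) *
            (-(x t i) + xm t i - (A t).transpose.mulVec (lam t) i))) t := by
      apply HasDerivAt.fun_sum
      intro i _
      exact ((hy t ht i).sub (hx t ht i)).mul (hlam t ht i)
    have := key (A t) (B t) (ytil t) (x t) (lam t) (xm t) (vtil t) (um t)
    rw [this] at hsum
    exact hsum
  have hInt : IntervalIntegrable F volume t0 tf := hFc.intervalIntegrable t0 tf
  have hFTC := intervalIntegral.integral_eq_sub_of_hasDerivAt hderiv hInt
  have hzero : (∑ i, (ytil tf i - x tf i) * lam tf i)
      - ∑ i, (ytil t0 i - x t0 i) * lam t0 i = 0 := by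
    rw [hy0, hyf, hx0, hxf]
    simp
  have : (∫ t in Set.Icc t0 tf, F t) = ∫ t in t0..tf, F t := by
    rw [intervalIntegral.integral_of_le hts, MeasureTheory.integral_Icc_eq_integral_Ioc]
  rw [this, hFTC, hzero]
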